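/- Let $r\ge 2$ be an integer and let $G$ be an $r$-colourable graph with colour classes $W_{(1)},\ldots,W_{(r)}$, all of the same size $h$. Suppose that for every $s\le r$ and every vertex $w\in\bigcup_{t\ne s}W_{(t)}$ we have $\deg(w,W_{(s)})\ge (1-\frac{1}{r^2})h$. Then $G$ contains at least $\frac{1}{2}h^r$ copies of the complete graph $K_r$ (i.e., at least $\frac12 h^r$ $r$-tuples $(w_1,\ldots,w_r)$ with $w_s\in W_{(s)}$ forming a clique). -/

import Mathlib

open Finset

/-- Number of edges (ordered pairs) between `A` and `B`. -/
noncomputable def eBetween {V : Type*} (G : SimpleGraph V) (A B : Finset V) : ℕ :=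
  Nat.card {p : V × V // p.1 ∈ A ∧ p.2 ∈ B ∧ G.Adj p.1 p.2}

/-- Edge density between two disjoint vertex sets. -/
noncomputable def density {V : Type*} (G : SimpleGraph V) (A B : Finset V) : ℝ :=
  (eBetween G A B : ℝ) / ((A.card : ℝ) * (B.card : ℝ))

/-- Number of neighbours of `v` inside the set `S`. -/
noncomputable def degTo {V : Type*} (G : SimpleGraph V) (v : V) (S : Set V) : ℕ :=
  Nat.card {u : V // u ∈ S ∧ G.Adj v u}

/-- `G` is an `ℓ`-partite graph with (nonempty, independent) parts `P 0, …, P (ℓ-1)`. -/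
def IsPartiteOn {V : Type*} (G : SimpleGraph V) {ℓ : ℕ} (P : Fin ℓ → Finset V) : Prop :=
  (∀ i, (P i).Nonempty) ∧ (∀ i j, i ≠ j → Disjoint (P i) (P j)) ∧
  (∀ v, ∃ i, v ∈ P i) ∧ ∀ i, ∀ a ∈ P i, ∀ b ∈ P i, ¬ G.Adj a b

/-- `G` contains a copy of `H` (an injective graph homomorphism). -/
def ContainsCopy {W V : Type*} (H : SimpleGraph W) (G : SimpleGraph V) : Prop :=
  ∃ f : W → V, Function.Injective f ∧ ∀ a b, H.Adj a b → G.Adj (f a) (f b)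

/-- `H` admits a colouring with `χ(H) - 1` colours in which all colour classes are
independent except the first, which induces a graph of maximum degree at most 1. -/
def AlmostColourCritical {W : Type*} [Fintype W] (H : SimpleGraph W) : Prop :=
  ∃ k : ℕ, H.chromaticNumber = (k : ℕ∞) ∧
    ∃ φ : W → Fin (k - 1),
      (∀ a b c : W, (φ a).val = 0 → (φ b).val = 0 → (φ c).val = 0 →
        H.Adj a b → H.Adj a c → b = c) ∧
      ∀ a b : W, (φ a).val ≠ 0 → φ a = φ b → ¬ H.Adj a b

theorem many_transversal_cliques {V : Type*} [Fintype V] (G : SimpleGraph V)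
    (r h : ℕ) (hr : 2 ≤ r) (Wc : Fin r → Finset V)
    (hdisj : ∀ s t, s ≠ t → Disjoint (Wc s) (Wc t))
    (hcover : ∀ v : V, ∃ s, v ∈ Wc s)
    (hind : ∀ s, ∀ a ∈ Wc s, ∀ b ∈ Wc s, ¬ G.Adj a b)
    (hcard : ∀ s, (Wc s).card = h)
    (hdeg : ∀ s t : Fin r, t ≠ s → ∀ v ∈ Wc t,
      (1 - 1 / (r : ℝ) ^ 2) * h ≤ (degTo G v (Wc s : Set V) : ℝ)) :
    (h : ℝ) ^ r / 2 ≤ (Nat.card {f : Fin r → V //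
      (∀ s, f s ∈ Wc s) ∧ ∀ s t, s ≠ t → G.Adj (f s) (f t)} : ℝ) := by
  classical
  have hrpos : (0:ℝ) < (r:ℝ) := by
    have : (0:ℕ) < r := by omega
    exact_mod_cast this
  set T : Finset (Fin r → V) := Fintype.piFinset Wc with hT
  have hTcard : T.card = h ^ r := by
    simp [hT, Fintype.card_piFinset, hcard]
  set Q : (Fin r → V) → Prop := fun f => ∀ s t, s ≠ t → G.Adj (f s) (f t) with hQ
  -- the number of transversal cliques equals the good filter
  have hNat : (Nat.card {f : Fin r → V //
      (∀ s, f s ∈ Wc s) ∧ ∀ s t, s ≠ t → G.Adj (f s) (f t)}) = (T.filter Q).card := by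
    rw [Nat.card_eq_fintype_card, Fintype.card_subtype]
    congr 1
    ext f
    simp [hT, Fintype.mem_piFinset, hQ]
  -- per-pair bound
  have key : ∀ s t : Fin r, s ≠ t →
      ((T.filter (fun f => ¬ G.Adj (f s) (f t))).card : ℝ) ≤ (h:ℝ)^r / (r:ℝ)^2 := by
    intro s t hst
    set W' : V → Fin r → Finset V := fun v i =>
      if i = t then {v} else if i = s then (Wc s).filter (fun u => ¬ G.Adj u v) else Wc i with hW'
    have hsub : T.filter (fun f => ¬ G.Adj (f s) (f t)) ⊆
        (Wc t).biUnion (fun v => Fintype.piFinset (W' v)) := by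
      intro f hf
      rw [mem_filter, hT, Fintype.mem_piFinset] at hf
      rw [mem_biUnion]
      refine ⟨f t, hf.1 t, ?_⟩
      rw [Fintype.mem_piFinset]
      intro i
      by_cases hit : i = t
      · simp [hW', hit]
      · by_cases his : i = s
        · subst his
          simp [hW', hit, hf.1 i, hf.2]
        · simp [hW', hit, his, hf.1 i]
    have hprod : ∀ v ∈ Wc t, (Fintype.piFinset (W' v)).card =
        ((Wc s).filter (fun u => ¬ G.Adj u v)).card * h ^ (r - 2) := by
      intro v hv
      rw [Fintype.card_piFinset]
      have ht : (t : Fin r) ∈ (univ : Finset (Fin r)) := mem_univ t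
      rw [← Finset.mul_prod_erase univ _ ht]
      have hs : s ∈ (univ : Finset (Fin r)).erase t := by
        simp [hst]
      rw [← Finset.mul_prod_erase _ _ hs]
      have h1 : (W' v t).card = 1 := by simp [hW']
      have h2 : (W' v s).card = ((Wc s).filter (fun u => ¬ G.Adj u v)).card := by
        simp [hW', hst]
      have h3 : ∀ i ∈ (((univ : Finset (Fin r)).erase t).erase s), (W' v i).card = h := by
        intro i hi
        simp only [mem_erase] at hi
        simp [hW', hi.1, hi.2.1, hcard]
      rw [h1, h2, Finset.prod_congr rfl h3, Finset.prod_const]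
      have hcard2 : (((univ : Finset (Fin r)).erase t).erase s).card = r - 2 := by
        rw [Finset.card_erase_of_mem hs, Finset.card_erase_of_mem ht, Finset.card_univ,
          Fintype.card_fin, Nat.sub_sub]
      rw [hcard2]; ring
    -- the non-neighbour count bound, in ℝ
    have hbadv : ∀ v ∈ Wc t, (((Wc s).filter (fun u => ¬ G.Adj u v)).card : ℝ) ≤
        (h:ℝ) / (r:ℝ)^2 := by
      intro v hv
      have hdegeq : ((Wc s).filter (fun u => G.Adj v u)).card = degTo G v (Wc s : Set V) := by
        rw [degTo, Nat.card_eq_fintype_card, Fintype.card_subtype]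
        congr 1
        ext u
        simp [and_comm]
      have hsplit : ((Wc s).filter (fun u => ¬ G.Adj u v)).card
          + ((Wc s).filter (fun u => G.Adj v u)).card = h := by
        have : ((Wc s).filter (fun u => ¬ G.Adj u v)) = ((Wc s).filter (fun u => ¬ G.Adj v u)) := by
          apply filter_congr; intro u _; simp [G.adj_comm]
        rw [this, ← hcard s]
        rw [add_comm]
        exact Finset.card_filter_add_card_filter_not _
      have hb := hdeg s t (Ne.symm hst) v hv
      rw [← hdegeq] at hb
      have hcastsp : (((Wc s).filter (fun u => ¬ G.Adj u v)).card : ℝ)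
          + (((Wc s).filter (fun u => G.Adj v u)).card : ℝ) = (h:ℝ) := by
        exact_mod_cast hsplit
      have : (((Wc s).filter (fun u => ¬ G.Adj u v)).card : ℝ)
          = (h:ℝ) - (((Wc s).filter (fun u => G.Adj v u)).card : ℝ) := by linarith
      rw [this]
      have expand : (1 - 1 / (r : ℝ) ^ 2) * h = (h:ℝ) - (h:ℝ)/(r:ℝ)^2 := by ring
      rw [expand] at hb
      linarith
    calc ((T.filter (fun f => ¬ G.Adj (f s) (f t))).card : ℝ)
        ≤ (((Wc t).biUnion (fun v => Fintype.piFinset (W' v))).card : ℝ) := by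
          exact_mod_cast Finset.card_le_card hsub
      _ ≤ ∑ v ∈ Wc t, ((Fintype.piFinset (W' v)).card : ℝ) := by
          exact_mod_cast Finset.card_biUnion_le
      _ ≤ ∑ v ∈ Wc t, ((h:ℝ) / (r:ℝ)^2 * (h:ℝ) ^ (r - 2)) := by
          apply Finset.sum_le_sum
          intro v hv
          rw [hprod v hv]
          push_cast
          have := hbadv v hv
          have hpow : (0:ℝ) ≤ (h:ℝ) ^ (r-2) := by positivity
          nlinarith
      _ = (h:ℝ) * ((h:ℝ) / (r:ℝ)^2 * (h:ℝ) ^ (r - 2)) := by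
          rw [Finset.sum_const, hcard t]; push_cast; ring
      _ = (h:ℝ)^r / (r:ℝ)^2 := by
          have : (h:ℝ)^r = (h:ℝ)^2 * (h:ℝ)^(r-2) := by
            rw [← pow_add, Nat.add_sub_cancel' hr]
          rw [this]; ring
  -- bad tuples
  set Bad := T.filter (fun f => ¬ Q f) with hBad
  set P : Finset (Fin r × Fin r) := univ.filter (fun p => p.1 < p.2) with hP
  have hBadsub : Bad ⊆ P.biUnion (fun p => T.filter (fun f => ¬ G.Adj (f p.1) (f p.2))) := by
    intro f hf
    rw [hBad, mem_filter] at hf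
    obtain ⟨hfT, hnq⟩ := hf
    simp only [hQ] at hnq
    push_neg at hnq
    obtain ⟨s, t, hst, hadj⟩ := hnq
    rw [mem_biUnion]
    rcases lt_or_gt_of_ne hst with hlt | hgt
    · exact ⟨(s, t), by simp [hP, hlt], by simp [mem_filter, hfT, hadj]⟩
    · refine ⟨(t, s), by simp [hP, hgt], ?_⟩
      simp only [mem_filter]
      exact ⟨hfT, fun hc => hadj hc.symm⟩
  have hPcard : ((P.card : ℝ)) ≤ (r:ℝ)^2 / 2 := by
    have himg : (P.image Prod.swap).card = P.card :=
      Finset.card_image_of_injective _ Prod.swap_injective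
    have hdisjP : Disjoint P (P.image Prod.swap) := by
      rw [Finset.disjoint_left]
      intro p hp hp'
      rw [hP, mem_filter] at hp
      rw [Finset.mem_image] at hp'
      obtain ⟨q, hq, hqe⟩ := hp'
      rw [hP, mem_filter] at hq
      have : q.2 < q.1 := by
        have := hp.2
        rw [← hqe] at this
        exact this
      exact absurd hq.2 (not_lt.mpr this.le)
    have hle : P.card + (P.image Prod.swap).card ≤ Fintype.card (Fin r × Fin r) := by
      rw [← Finset.card_union_of_disjoint hdisjP]
      exact (Finset.card_le_card (Finset.subset_univ _)).trans_eq (Finset.card_univ)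
    rw [himg] at hle
    rw [Fintype.card_prod, Fintype.card_fin] at hle
    have h2 : ((P.card + P.card : ℕ) : ℝ) ≤ ((r * r : ℕ) : ℝ) := by exact_mod_cast hle
    push_cast at h2
    nlinarith
  have hBadcard : (Bad.card : ℝ) ≤ (h:ℝ)^r / 2 := by
    calc (Bad.card : ℝ)
        ≤ ((P.biUnion (fun p => T.filter (fun f => ¬ G.Adj (f p.1) (f p.2)))).card : ℝ) := by
          exact_mod_cast Finset.card_le_card hBadsub
      _ ≤ ∑ p ∈ P, ((T.filter (fun f => ¬ G.Adj (f p.1) (f p.2))).card : ℝ) := by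
          exact_mod_cast Finset.card_biUnion_le
      _ ≤ ∑ p ∈ P, ((h:ℝ)^r / (r:ℝ)^2) := by
          apply Finset.sum_le_sum
          intro p hp
          rw [hP, mem_filter] at hp
          exact key p.1 p.2 (ne_of_lt hp.2)
      _ = P.card * ((h:ℝ)^r / (r:ℝ)^2) := by rw [Finset.sum_const, nsmul_eq_mul]
      _ ≤ (r:ℝ)^2/2 * ((h:ℝ)^r / (r:ℝ)^2) := by
          apply mul_le_mul_of_nonneg_right hPcard
          positivity
      _ = (h:ℝ)^r / 2 := by field_simp
  have hsplit : (T.filter Q).card + Bad.card = h ^ r := by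
    rw [hBad, ← hTcard]
    exact Finset.card_filter_add_card_filter_not _
  rw [hNat]
  have hcast : ((T.filter Q).card : ℝ) + (Bad.card : ℝ) = (h:ℝ)^r := by
    exact_mod_cast hsplit
  linarith
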